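/- Let T > 0, let g : [0,T] → [0,∞) be measurable with ∫₀ᵀ g(t) dt < ∞, let (C_n)_{n≥0} be non-negative constants, and let (f_n)_{n≥0} be non-negative measurable functions on [0,T] with sup_{t∈[0,T]} f_0(t) < ∞ and f_{n+1}(t) ≤ C_n + ∫₀ᵗ f_n(s) g(t−s) ds for every n ≥ 0 and t ∈ [0,T]. If Σ_{n≥0} C_n^{1/p} < ∞ for some p > 1, then Σ_{n≥1} (sup_{t∈[0,T]} f_n(t))^{1/p} < ∞. -/

import Mathlib

open MeasureTheory Set

private lemma aux_rpow_add_le {a b q : ℝ} (ha : 0 ≤ a) (hb : 0 ≤ b) (h0 : 0 ≤ q)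
    (h1 : q ≤ 1) : (a + b) ^ q ≤ a ^ q + b ^ q := by
  have h := NNReal.rpow_add_le_add_rpow a.toNNReal b.toNNReal h0 h1
  have h2 := NNReal.coe_le_coe.2 h
  push_cast [NNReal.coe_rpow] at h2
  rwa [Real.coe_toNNReal a ha, Real.coe_toNNReal b hb] at h2

private def gronB (M0 ρ : ℝ) (C : ℕ → ℝ) : ℕ → ℝ
  | 0 => M0
  | n + 1 => C n + ρ * gronB M0 ρ C n

/-- Gronwall-type Lemma A.1 (second assertion): under the convolution recursion
`f_{n+1}(t) ≤ C_n + ∫₀ᵗ f_n(s) g(t-s) ds`, if `Σ_{n≥0} C_n^{1/p} < ∞` for some `p > 1`,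
then `Σ_{n≥1} (sup_{t∈[0,T]} f_n(t))^{1/p} < ∞`. -/
theorem stmt_1 (T : ℝ) (hT : 0 < T) (g : ℝ → ℝ) (hg_meas : Measurable g)
    (hg_nonneg : ∀ t ∈ Icc (0 : ℝ) T, 0 ≤ g t)
    (hg_int : IntegrableOn g (Icc (0 : ℝ) T))
    (C : ℕ → ℝ) (hC : ∀ n, 0 ≤ C n)
    (f : ℕ → ℝ → ℝ) (hf_meas : ∀ n, Measurable (f n))
    (hf_nonneg : ∀ n, ∀ t ∈ Icc (0 : ℝ) T, 0 ≤ f n t)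
    (hf0_bdd : BddAbove (f 0 '' Icc (0 : ℝ) T))
    (hrec : ∀ n, ∀ t ∈ Icc (0 : ℝ) T,
      f (n + 1) t ≤ C n + ∫ s in Icc (0 : ℝ) t, f n s * g (t - s))
    (p : ℝ) (hp : 1 < p)
    (hCsum : Summable (fun n : ℕ => C n ^ (1 / p))) :
    Summable (fun n : ℕ => (sSup (f (n + 1) '' Icc (0 : ℝ) T)) ^ (1 / p)) := by
  set q : ℝ := 1 / p with hqdef
  have hq0 : 0 < q := by positivity
  have hq1 : q ≤ 1 := by
    rw [hqdef, div_le_one (by linarith)]; linarith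
  -- integrability of u ↦ exp(-l u) g u on [0,T] for l ≥ 0
  have hint_exp : ∀ l : ℝ, 0 ≤ l →
      IntegrableOn (fun u => Real.exp (-l * u) * g u) (Icc (0 : ℝ) T) := by
    intro l hl
    refine MeasureTheory.Integrable.mono hg_int (((Real.measurable_exp.comp ((measurable_id.const_mul (-l)))).mul
        hg_meas).aestronglyMeasurable) ?_
    filter_upwards [ae_restrict_mem measurableSet_Icc] with u hu
    have hx : -l * u ≤ 0 := by nlinarith [hu.1]
    have hexp : Real.exp (-l * u) ≤ 1 := Real.exp_le_one_iff.2 hx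
    rw [Real.norm_eq_abs, abs_mul, Real.abs_exp, Real.norm_eq_abs]
    exact mul_le_of_le_one_left (abs_nonneg _) hexp
  -- choose l ≥ 0 with ρ(l) < 1
  obtain ⟨l, hl0, hρlt1⟩ :
      ∃ l : ℝ, 0 ≤ l ∧ (∫ u in Icc (0 : ℝ) T, Real.exp (-l * u) * g u) < 1 := by
    have htend : Filter.Tendsto
        (fun n : ℕ => ∫ u in Icc (0 : ℝ) T, Real.exp (-(n : ℝ) * u) * g u)
        Filter.atTop (nhds (∫ _u in Icc (0 : ℝ) T, (0 : ℝ))) := by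
      refine tendsto_integral_of_dominated_convergence (fun u => |g u|)
        (fun n => ((Real.measurable_exp.comp
          (measurable_id.const_mul (-(n : ℝ)))).mul hg_meas).aestronglyMeasurable)
        hg_int.abs ?_ ?_
      · intro n
        filter_upwards [ae_restrict_mem measurableSet_Icc] with u hu
        have hx : -(n : ℝ) * u ≤ 0 := by
          have := hu.1
          have : (0:ℝ) ≤ (n : ℝ) * u := mul_nonneg (Nat.cast_nonneg n) hu.1
          linarith
        have hexp : Real.exp (-(n : ℝ) * u) ≤ 1 := Real.exp_le_one_iff.2 hx
        rw [Real.norm_eq_abs, abs_mul, Real.abs_exp]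
        exact mul_le_of_le_one_left (abs_nonneg _) hexp
      · have h0 : (volume.restrict (Icc (0 : ℝ) T)) {(0 : ℝ)} = 0 := by
          rw [Measure.restrict_apply (measurableSet_singleton 0)]
          exact measure_mono_null Set.inter_subset_left Real.volume_singleton
        have hne : ∀ᵐ u ∂(volume.restrict (Icc (0 : ℝ) T)), u ≠ (0 : ℝ) := by
          refine (ae_iff).2 ?_
          convert h0 using 2
          ext x; simp
        filter_upwards [hne, ae_restrict_mem measurableSet_Icc] with u hu hmem
        have hu0 : 0 < u := lt_of_le_of_ne hmem.1 (Ne.symm hu)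
        have h1 : Filter.Tendsto (fun n : ℕ => -(n : ℝ) * u) Filter.atTop Filter.atBot := by
          have h0 : Filter.Tendsto (fun n : ℕ => (n : ℝ) * u) Filter.atTop Filter.atTop :=
            tendsto_natCast_atTop_atTop.atTop_mul_const hu0
          have := Filter.tendsto_neg_atTop_atBot.comp h0
          simpa [Function.comp_def, neg_mul] using this
        have h2 : Filter.Tendsto (fun n : ℕ => Real.exp (-(n : ℝ) * u))
            Filter.atTop (nhds 0) := Real.tendsto_exp_atBot.comp h1
        simpa using h2.mul_const (g u)
    rw [integral_zero] at htend
    obtain ⟨n, hn⟩ := (htend.eventually_lt_const one_pos).exists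
    exact ⟨(n : ℝ), Nat.cast_nonneg n, hn⟩
  set ρ : ℝ := ∫ u in Icc (0 : ℝ) T, Real.exp (-l * u) * g u with hρdef
  have hρint := hint_exp l hl0
  have hρ0 : 0 ≤ ρ := by
    refine integral_nonneg_of_ae ?_
    filter_upwards [ae_restrict_mem measurableSet_Icc] with u hu
    exact mul_nonneg (Real.exp_nonneg _) (hg_nonneg u hu)
  -- the key convolution estimate
  have key : ∀ (B : ℝ), 0 ≤ B → ∀ (n : ℕ), ∀ t ∈ Icc (0 : ℝ) T,
      (∀ s ∈ Icc (0 : ℝ) T, f n s ≤ B * Real.exp (l * s)) →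
      (∫ s in Icc (0 : ℝ) t, f n s * g (t - s)) ≤ B * (Real.exp (l * t) * ρ) := by
    intro B hB n t ht hfB
    obtain ⟨ht0, htT⟩ := ht
    set φ : ℝ → ℝ := fun u => Real.exp (l * (t - u)) * g u with hφdef
    have hφmeas : Measurable φ :=
      (Real.measurable_exp.comp ((measurable_const.sub measurable_id).const_mul l)).mul hg_meas
    have hg_sub : IntegrableOn g (Icc (0 : ℝ) t) :=
      hg_int.mono_set (Icc_subset_Icc_right htT)
    have hφint : IntegrableOn φ (Icc (0 : ℝ) t) := by
      refine MeasureTheory.Integrable.mono (hg_sub.const_mul (Real.exp (l * t)))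
        hφmeas.aestronglyMeasurable ?_
      filter_upwards [ae_restrict_mem measurableSet_Icc] with u hu
      have hle : Real.exp (l * (t - u)) ≤ Real.exp (l * t) := by
        apply Real.exp_le_exp.2
        nlinarith [hu.1]
      rw [Real.norm_eq_abs, abs_mul, Real.abs_exp, Real.norm_eq_abs, abs_mul,
        Real.abs_exp]
      exact mul_le_mul_of_nonneg_right hle (abs_nonneg _)
    have hφII : IntervalIntegrable φ volume 0 t := by
      rwa [intervalIntegrable_iff_integrableOn_Icc_of_le ht0]
    have hψII : IntervalIntegrable (fun s => φ (t - s)) volume 0 t := by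
      simpa using (hφII.comp_sub_left t).symm
    have hψeq : ∀ s : ℝ, φ (t - s) = Real.exp (l * s) * g (t - s) := by
      intro s; simp [hφdef]
    have hψII' : IntervalIntegrable (fun s => B * (Real.exp (l * s) * g (t - s)))
        volume 0 t := by
      refine (hψII.const_mul B).congr ?_
      simp only [hψeq]
      exact fun _ _ => rfl
    have hψint : IntegrableOn (fun s => B * (Real.exp (l * s) * g (t - s)))
        (Icc (0 : ℝ) t) := by
      rwa [intervalIntegrable_iff_integrableOn_Icc_of_le ht0] at hψII'
    have step1 : (∫ s in Icc (0 : ℝ) t, f n s * g (t - s)) ≤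
        ∫ s in Icc (0 : ℝ) t, B * (Real.exp (l * s) * g (t - s)) := by
      refine integral_mono_of_nonneg ?_ hψint ?_
      · filter_upwards [ae_restrict_mem measurableSet_Icc] with s hs
        have hsT : s ∈ Icc (0 : ℝ) T := ⟨hs.1, le_trans hs.2 htT⟩
        have hts : t - s ∈ Icc (0 : ℝ) T := ⟨by linarith [hs.2], by linarith [hs.1]⟩
        exact mul_nonneg (hf_nonneg n s hsT) (hg_nonneg _ hts)
      · filter_upwards [ae_restrict_mem measurableSet_Icc] with s hs
        have hsT : s ∈ Icc (0 : ℝ) T := ⟨hs.1, le_trans hs.2 htT⟩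
        have hts : t - s ∈ Icc (0 : ℝ) T := ⟨by linarith [hs.2], by linarith [hs.1]⟩
        have := mul_le_mul_of_nonneg_right (hfB s hsT) (hg_nonneg _ hts)
        linarith [this]
    have step2 : (∫ s in Icc (0 : ℝ) t, B * (Real.exp (l * s) * g (t - s))) =
        B * ∫ u in Icc (0 : ℝ) t, φ u := by
      rw [integral_const_mul]
      congr 1
      rw [integral_Icc_eq_integral_Ioc, integral_Icc_eq_integral_Ioc,
        ← intervalIntegral.integral_of_le ht0, ← intervalIntegral.integral_of_le ht0]
      have := intervalIntegral.integral_comp_sub_left φ t (a := 0) (b := t)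
      simp only [sub_zero, sub_self] at this
      rw [← this]
      congr 1
      ext s
      rw [hψeq]
    have step3 : (∫ u in Icc (0 : ℝ) t, φ u) ≤ Real.exp (l * t) * ρ := by
      have hrw : ∀ u : ℝ, φ u = Real.exp (l * t) * (Real.exp (-l * u) * g u) := by
        intro u
        rw [hφdef]
        rw [← mul_assoc, ← Real.exp_add]
        ring_nf
      calc (∫ u in Icc (0 : ℝ) t, φ u)
          = ∫ u in Icc (0 : ℝ) t, Real.exp (l * t) * (Real.exp (-l * u) * g u) := by
            simp only [hrw]
        _ = Real.exp (l * t) * ∫ u in Icc (0 : ℝ) t, Real.exp (-l * u) * g u := by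
            rw [integral_const_mul]
        _ ≤ Real.exp (l * t) * ρ := by
            refine mul_le_mul_of_nonneg_left ?_ (Real.exp_nonneg _)
            refine setIntegral_mono_set hρint ?_ ?_
            · filter_upwards [ae_restrict_mem measurableSet_Icc] with u hu
              exact mul_nonneg (Real.exp_nonneg _) (hg_nonneg u hu)
            · exact HasSubset.Subset.eventuallyLE (Icc_subset_Icc_right htT)
      done
    calc (∫ s in Icc (0 : ℝ) t, f n s * g (t - s))
        ≤ ∫ s in Icc (0 : ℝ) t, B * (Real.exp (l * s) * g (t - s)) := step1
      _ = B * ∫ u in Icc (0 : ℝ) t, φ u := step2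
      _ ≤ B * (Real.exp (l * t) * ρ) := mul_le_mul_of_nonneg_left step3 hB
  -- the recursive bound sequence
  set M0 : ℝ := sSup (f 0 '' Icc (0 : ℝ) T) with hM0def
  have h0mem : (0 : ℝ) ∈ Icc (0 : ℝ) T := ⟨le_refl 0, hT.le⟩
  have hM0_nonneg : 0 ≤ M0 := le_trans (hf_nonneg 0 0 h0mem)
    (le_csSup hf0_bdd ⟨0, h0mem, rfl⟩)
  set b : ℕ → ℝ := gronB M0 ρ C with hbdef
  have hb0 : b 0 = M0 := rfl
  have hbS : ∀ n, b (n + 1) = C n + ρ * b n := fun n => rfl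
  have hb_nonneg : ∀ n, 0 ≤ b n := by
    intro n
    induction n with
    | zero => exact hM0_nonneg
    | succ k ih =>
      rw [hbS]
      have := mul_nonneg hρ0 ih
      linarith [hC k]
  have hbd : ∀ n, ∀ t ∈ Icc (0 : ℝ) T, f n t ≤ b n * Real.exp (l * t) := by
    intro n
    induction n with
    | zero =>
      intro t ht
      have h1 : f 0 t ≤ M0 := le_csSup hf0_bdd ⟨t, ht, rfl⟩
      have h2 : (1 : ℝ) ≤ Real.exp (l * t) :=
        Real.one_le_exp (mul_nonneg hl0 ht.1)
      calc f 0 t ≤ M0 := h1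
        _ = M0 * 1 := (mul_one M0).symm
        _ ≤ M0 * Real.exp (l * t) := mul_le_mul_of_nonneg_left h2 hM0_nonneg
    | succ k ih =>
      intro t ht
      have hkey := key (b k) (hb_nonneg k) k t ht ih
      have h2 : (1 : ℝ) ≤ Real.exp (l * t) :=
        Real.one_le_exp (mul_nonneg hl0 ht.1)
      calc f (k + 1) t ≤ C k + ∫ s in Icc (0 : ℝ) t, f k s * g (t - s) := hrec k t ht
        _ ≤ C k + b k * (Real.exp (l * t) * ρ) := by linarith
        _ ≤ (C k + ρ * b k) * Real.exp (l * t) := by nlinarith [hC k, hb_nonneg k]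
        _ = b (k + 1) * Real.exp (l * t) := by rw [hbS]
  -- bounds for the sups
  have hE0 : (0 : ℝ) ≤ Real.exp (l * T) := Real.exp_nonneg _
  have hMle : ∀ n : ℕ, sSup (f (n + 1) '' Icc (0 : ℝ) T) ≤ b (n + 1) * Real.exp (l * T) := by
    intro n
    refine csSup_le ⟨f (n + 1) 0, ⟨0, h0mem, rfl⟩⟩ ?_
    rintro y ⟨t, ht, rfl⟩
    calc f (n + 1) t ≤ b (n + 1) * Real.exp (l * t) := hbd (n + 1) t ht
      _ ≤ b (n + 1) * Real.exp (l * T) :=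
        mul_le_mul_of_nonneg_left (Real.exp_le_exp.2
          (mul_le_mul_of_nonneg_left ht.2 hl0)) (hb_nonneg (n + 1))
  have hMbdd : ∀ n : ℕ, BddAbove (f (n + 1) '' Icc (0 : ℝ) T) := by
    intro n
    refine ⟨b (n + 1) * Real.exp (l * T), ?_⟩
    rintro y ⟨t, ht, rfl⟩
    calc f (n + 1) t ≤ b (n + 1) * Real.exp (l * t) := hbd (n + 1) t ht
      _ ≤ b (n + 1) * Real.exp (l * T) :=
        mul_le_mul_of_nonneg_left (Real.exp_le_exp.2
          (mul_le_mul_of_nonneg_left ht.2 hl0)) (hb_nonneg (n + 1))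
  have hM_nonneg : ∀ n : ℕ, 0 ≤ sSup (f (n + 1) '' Icc (0 : ℝ) T) := by
    intro n
    exact le_trans (hf_nonneg (n + 1) 0 h0mem) (le_csSup (hMbdd n) ⟨0, h0mem, rfl⟩)
  -- summability of (b (n+1))^q
  set u : ℕ → ℝ := fun n => b n ^ q with hudef
  have hu_nonneg : ∀ n, 0 ≤ u n := fun n => Real.rpow_nonneg (hb_nonneg n) q
  set r : ℝ := ρ ^ q with hrdef
  have hr0 : 0 ≤ r := Real.rpow_nonneg hρ0 q
  have hr1 : r < 1 := Real.rpow_lt_one hρ0 hρlt1 hq0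
  have hc_nonneg : ∀ n : ℕ, 0 ≤ C n ^ q := fun n => Real.rpow_nonneg (hC n) q
  have hustep : ∀ n, u (n + 1) ≤ C n ^ q + r * u n := by
    intro n
    rw [hudef]
    simp only
    rw [hbS]
    calc (C n + ρ * b n) ^ q ≤ C n ^ q + (ρ * b n) ^ q :=
        aux_rpow_add_le (hC n) (mul_nonneg hρ0 (hb_nonneg n)) hq0.le hq1
      _ = C n ^ q + r * u n := by
        rw [Real.mul_rpow hρ0 (hb_nonneg n)]
  set Ctot : ℝ := ∑' n, C n ^ q with hCtotdef
  have hSle : ∀ N : ℕ, ∑ n ∈ Finset.range N, u (n + 1) ≤ (Ctot + r * u 0) / (1 - r) := by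
    intro N
    have h2 : ∑ n ∈ Finset.range N, u n ≤ u 0 + ∑ n ∈ Finset.range N, u (n + 1) := by
      cases N with
      | zero => simp [hu_nonneg 0]
      | succ M =>
        rw [Finset.sum_range_succ' u M]
        have : ∑ n ∈ Finset.range M, u (n + 1) ≤ ∑ n ∈ Finset.range (M + 1), u (n + 1) := by
          rw [Finset.sum_range_succ]
          linarith [hu_nonneg (M + 1)]
        linarith
    have h3 : ∑ n ∈ Finset.range N, u (n + 1) ≤
        Ctot + r * (u 0 + ∑ n ∈ Finset.range N, u (n + 1)) := by
      calc ∑ n ∈ Finset.range N, u (n + 1)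
          ≤ ∑ n ∈ Finset.range N, (C n ^ q + r * u n) :=
            Finset.sum_le_sum fun n _ => hustep n
        _ = (∑ n ∈ Finset.range N, C n ^ q) + r * ∑ n ∈ Finset.range N, u n := by
            rw [Finset.sum_add_distrib, Finset.mul_sum]
        _ ≤ Ctot + r * (u 0 + ∑ n ∈ Finset.range N, u (n + 1)) := by
            refine add_le_add ?_ (mul_le_mul_of_nonneg_left h2 hr0)
            exact Summable.sum_le_tsum _ (fun i _ => hc_nonneg i) hCsum
    rw [le_div_iff₀ (by linarith : (0 : ℝ) < 1 - r)]
    nlinarith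
  have husum : Summable (fun n : ℕ => u (n + 1)) :=
    summable_of_sum_range_le (fun n => hu_nonneg (n + 1)) hSle
  have hfinal : Summable (fun n : ℕ => u (n + 1) * Real.exp (l * T) ^ q) :=
    husum.mul_right _
  refine Summable.of_nonneg_of_le (fun n => Real.rpow_nonneg (hM_nonneg n) q) ?_ hfinal
  intro n
  calc (sSup (f (n + 1) '' Icc (0 : ℝ) T)) ^ q
      ≤ (b (n + 1) * Real.exp (l * T)) ^ q :=
        Real.rpow_le_rpow (hM_nonneg n) (hMle n) hq0.le
    _ = u (n + 1) * Real.exp (l * T) ^ q := by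
        rw [Real.mul_rpow (hb_nonneg (n + 1)) hE0]
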